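/- arXiv:2408.08499 — 6 statements merged into one kernel-verified Lean document; each statement's English description precedes it below -/
import Mathlib

section
/- For the scalar linear shift with squared loss, PR(θ_PO) = (σ₀²(1-μ)² + μ₀²σ² + 2σσ₀μ₀(1-μ))/(2(σ² + (1-μ)²)). -/
open MeasureTheory

/-- `PR(θ_PO) = (σ₀²(1-μ)² + μ₀²σ² + 2σσ₀μ₀(1-μ)) / (2(σ² + (1-μ)²))`. -/
theorem stmt5 {Ω : Type*} [MeasureSpace Ω] [IsProbabilityMeasure (volume : Measure Ω)]
    (z₀ : Ω → ℝ) (hz : MemLp z₀ 2 (volume : Measure Ω))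
    (hmean : ∫ ω, z₀ ω = 0) (hvar : ∫ ω, (z₀ ω) ^ 2 = 1)
    (σ₀ σ μ₀ μ : ℝ) (hσ₀ : 0 < σ₀) (hσ : 0 < σ) (hμ : μ < 1)
    (θPO : ℝ) (hPO : θPO = ((1 - μ) * μ₀ - σ₀ * σ) / (σ ^ 2 + (1 - μ) ^ 2)) :
    ∫ ω, (θPO - ((σ₀ + σ * θPO) * z₀ ω + μ₀ + μ * θPO)) ^ 2 / 2
      = (σ₀ ^ 2 * (1 - μ) ^ 2 + μ₀ ^ 2 * σ ^ 2 + 2 * σ * σ₀ * μ₀ * (1 - μ))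
          / (2 * (σ ^ 2 + (1 - μ) ^ 2)) := by
  set a : ℝ := θPO - μ₀ - μ * θPO with ha
  set b : ℝ := σ₀ + σ * θPO with hb
  have hi1 : Integrable z₀ (volume : Measure Ω) :=
    hz.integrable (by norm_num)
  have hi2 : Integrable (fun ω => z₀ ω ^ 2) (volume : Measure Ω) := by
    have := hz.integrable_sq
    simpa [sq] using this
  have hrw : (fun ω => (θPO - ((σ₀ + σ * θPO) * z₀ ω + μ₀ + μ * θPO)) ^ 2 / 2)
      = fun ω => (a ^ 2 / 2 + (-(a * b)) * z₀ ω) + (b ^ 2 / 2) * z₀ ω ^ 2 := by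
    funext ω; simp [ha, hb]; ring
  rw [hrw]
  rw [integral_add (by exact (integrable_const _).add (hi1.const_mul _)) (hi2.const_mul _),
    integral_add (integrable_const _) (hi1.const_mul _),
    integral_const_mul, integral_const_mul, hmean, hvar, integral_const]
  simp only [measure_univ, ENNReal.toReal_one, probReal_univ, smul_eq_mul, one_mul, mul_zero, add_zero, mul_one]
  have hd : σ ^ 2 + (1 - μ) ^ 2 ≠ 0 := by positivity
  rw [ha, hb, hPO]
  field_simp
  ring
end

section
/- Under a pure mean shift with Mahalanobis loss, every stationary point of the performative risk equals (I - μ)⁻¹μ₀; hence the performatively optimal, performatively stable, and stationary solution sets coincide. -/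
open MeasureTheory

open scoped RealInnerProductSpace

/-- Pure mean shift with Mahalanobis loss: every stationary point of the performative
risk equals `(I - μ)⁻¹ μ₀`, and that point is a global minimizer of `PR`; hence the
performatively optimal, performatively stable, and stationary solution sets coincide. -/
theorem stmt7 {Ω : Type*} [MeasureSpace Ω] [IsProbabilityMeasure (volume : Measure Ω)]
    {d : ℕ}
    (z₀ : Ω → EuclideanSpace ℝ (Fin d))
    (hz : MemLp z₀ 2 (volume : Measure Ω))
    (hmean : ∫ ω, z₀ ω = 0)
    (hcov : ∀ x y : EuclideanSpace ℝ (Fin d),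
      ∫ ω, (@inner ℝ _ _ x (z₀ ω)) * (@inner ℝ _ _ (z₀ ω) y) = @inner ℝ _ _ x y)
    (Sig₀ : EuclideanSpace ℝ (Fin d) →L[ℝ] EuclideanSpace ℝ (Fin d))
    (hSig₀ : Function.Bijective Sig₀)
    (μmap : EuclideanSpace ℝ (Fin d) →L[ℝ] EuclideanSpace ℝ (Fin d))
    (hμ : ‖μmap‖ < 1)
    (μ₀ : EuclideanSpace ℝ (Fin d))
    (A : EuclideanSpace ℝ (Fin d) →L[ℝ] EuclideanSpace ℝ (Fin d))
    (hAsa : IsSelfAdjoint A)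
    (hApos : ∀ x : EuclideanSpace ℝ (Fin d), x ≠ 0 → 0 < (@inner ℝ _ _ x (A x)))
    (PR : EuclideanSpace ℝ (Fin d) → ℝ)
    (hPR : ∀ θ : EuclideanSpace ℝ (Fin d),
      PR θ = ∫ ω, (@inner ℝ _ _ (θ - (Sig₀ (z₀ ω) + μ₀ + μmap θ))
        (A (θ - (Sig₀ (z₀ ω) + μ₀ + μmap θ)))) / 2) :
    (∀ θ : EuclideanSpace ℝ (Fin d),
      fderiv ℝ PR θ = 0 ↔
        θ = (((Units.oneSub μmap hμ)⁻¹ :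
          (EuclideanSpace ℝ (Fin d) →L[ℝ] EuclideanSpace ℝ (Fin d))ˣ) :
          EuclideanSpace ℝ (Fin d) →L[ℝ] EuclideanSpace ℝ (Fin d)) μ₀) ∧
    (∀ θ' : EuclideanSpace ℝ (Fin d),
      PR ((((Units.oneSub μmap hμ)⁻¹ :
          (EuclideanSpace ℝ (Fin d) →L[ℝ] EuclideanSpace ℝ (Fin d))ˣ) :
          EuclideanSpace ℝ (Fin d) →L[ℝ] EuclideanSpace ℝ (Fin d)) μ₀) ≤ PR θ') := by
  set u : (EuclideanSpace ℝ (Fin d) →L[ℝ] EuclideanSpace ℝ (Fin d))ˣ :=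
    Units.oneSub μmap hμ with hu
  set T : EuclideanSpace ℝ (Fin d) →L[ℝ] EuclideanSpace ℝ (Fin d) :=
    (u : EuclideanSpace ℝ (Fin d) →L[ℝ] EuclideanSpace ℝ (Fin d)) with hT
  have hTapp : ∀ θ : EuclideanSpace ℝ (Fin d), T θ = θ - μmap θ := by
    intro θ
    simp [hT, hu, ContinuousLinearMap.sub_apply]
  set θs : EuclideanSpace ℝ (Fin d) :=
    ((u⁻¹ : (EuclideanSpace ℝ (Fin d) →L[ℝ] EuclideanSpace ℝ (Fin d))ˣ) :
      EuclideanSpace ℝ (Fin d) →L[ℝ] EuclideanSpace ℝ (Fin d)) μ₀ with hθs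
  have hTθs : T θs = μ₀ := by
    rw [hθs, hT, ← ContinuousLinearMap.mul_apply, Units.mul_inv,
      ContinuousLinearMap.one_apply]
  set g : Ω → EuclideanSpace ℝ (Fin d) := fun ω => Sig₀ (z₀ ω) with hgdef
  have hg2 : MemLp g 2 (volume : Measure Ω) := Sig₀.comp_memLp' hz
  have hAg2 : MemLp (fun ω => A (g ω)) 2 (volume : Measure Ω) := A.comp_memLp' hg2
  have hgint : Integrable g := hg2.integrable one_le_two
  have hAgint : Integrable (fun ω => A (g ω)) := hAg2.integrable one_le_two
  have hgmean : ∫ ω, g ω = 0 := by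
    have h := Sig₀.integral_comp_comm (hz.integrable one_le_two)
    simpa [hgdef, hmean] using h
  have hAgmean : ∫ ω, A (g ω) = 0 := by
    have h := A.integral_comp_comm hgint
    simpa [hgmean] using h
  set C : ℝ := ∫ ω, ⟪g ω, A (g ω)⟫ with hC
  have hquad_int : Integrable (fun ω => ⟪g ω, A (g ω)⟫) := by
    have hb : MemLp ((fun ω => ‖g ω‖) • fun ω => ‖A (g ω)‖) 1 (volume : Measure Ω) :=
      hAg2.norm.smul hg2.norm (hpqr := ⟨by
        rw [ENNReal.inv_two_add_inv_two, inv_one]⟩)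
    refine Integrable.mono' (memLp_one_iff_integrable.mp hb)
      (hg2.1.inner hAg2.1) (Filter.Eventually.of_forall fun ω => ?_)
    simpa [Pi.smul_apply, smul_eq_mul] using norm_inner_le_norm (𝕜 := ℝ) (g ω) (A (g ω))
  -- key formula
  have key : ∀ θ : EuclideanSpace ℝ (Fin d),
      PR θ = (⟪T θ - μ₀, A (T θ - μ₀)⟫ + C) / 2 := by
    intro θ
    set v : EuclideanSpace ℝ (Fin d) := T θ - μ₀ with hv
    have hpt : ∀ ω, (⟪θ - (Sig₀ (z₀ ω) + μ₀ + μmap θ), A (θ - (Sig₀ (z₀ ω) + μ₀ + μmap θ))⟫) / 2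
        = (⟪v, A v⟫ - ⟪v, A (g ω)⟫ - (⟪g ω, A v⟫ - ⟪g ω, A (g ω)⟫)) / 2 := by
      intro ω
      have h1 : θ - (Sig₀ (z₀ ω) + μ₀ + μmap θ) = v - g ω := by
        rw [hv, hTapp, hgdef]
        abel
      rw [h1, map_sub, inner_sub_left, inner_sub_right, inner_sub_right]
    rw [hPR θ]
    simp_rw [hpt]
    rw [integral_div]
    have i1 : Integrable (fun ω => ⟪v, A (g ω)⟫) := hAgint.const_inner v
    have i2 : Integrable (fun ω => ⟪g ω, A v⟫) := hgint.inner_const (A v)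
    have i3 : Integrable (fun ω => ⟪v, A v⟫ - ⟪v, A (g ω)⟫) :=
      (integrable_const _).sub i1
    have i4 : Integrable (fun ω => ⟪g ω, A v⟫ - ⟪g ω, A (g ω)⟫) :=
      i2.sub hquad_int
    rw [integral_sub i3 i4, integral_sub (integrable_const _) i1,
      integral_sub i2 hquad_int, integral_const]
    have e1 : ∫ ω, ⟪v, A (g ω)⟫ = 0 := by
      rw [integral_inner hAgint, hAgmean, inner_zero_right]
    have e2 : ∫ ω, ⟪g ω, A v⟫ = 0 := by
      have hcomm : ∀ ω, ⟪g ω, A v⟫ = ⟪A v, g ω⟫ := fun ω => real_inner_comm _ _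
      simp only [hcomm]
      rw [integral_inner hgint, hgmean, inner_zero_right]
    rw [e1, e2, ← hC]
    rw [probReal_univ, one_smul]
    ring
  have hPRθs : PR θs = C / 2 := by
    rw [key, hTθs]
    simp
  have hq_nonneg : ∀ x : EuclideanSpace ℝ (Fin d), 0 ≤ ⟪x, A x⟫ := by
    intro x
    rcases eq_or_ne x 0 with rfl | hx
    · simp
    · exact (hApos x hx).le
  have hq_zero : ∀ x : EuclideanSpace ℝ (Fin d), ⟪x, A x⟫ = 0 → x = 0 := by
    intro x hx
    by_contra h
    exact absurd hx (ne_of_gt (hApos x h))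
  constructor
  · intro θ
    set v : EuclideanSpace ℝ (Fin d) := T θ - μ₀ with hv
    have hQ : HasFDerivAt (fun θ : EuclideanSpace ℝ (Fin d) => ⟪T θ - μ₀, A (T θ - μ₀)⟫)
        ((fderivInnerCLM ℝ (v, A v)).comp (T.prod (A.comp T))) θ := by
      have h1 : HasFDerivAt (fun θ : EuclideanSpace ℝ (Fin d) => T θ - μ₀) T θ :=
        (T.hasFDerivAt).sub_const μ₀
      have h2 : HasFDerivAt (fun θ : EuclideanSpace ℝ (Fin d) => A (T θ - μ₀)) (A.comp T) θ :=
        A.hasFDerivAt.comp θ h1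
      exact h1.inner ℝ h2
    have hPReq : PR = fun θ : EuclideanSpace ℝ (Fin d) =>
        (2⁻¹ : ℝ) • (⟪T θ - μ₀, A (T θ - μ₀)⟫ + C) := by
      funext θ'
      rw [key θ', smul_eq_mul]
      ring
    have hD : HasFDerivAt PR
        ((2⁻¹ : ℝ) • ((fderivInnerCLM ℝ (v, A v)).comp (T.prod (A.comp T)))) θ := by
      rw [hPReq]
      exact (hQ.add_const C).const_smul (2⁻¹ : ℝ)
    rw [hD.fderiv]
    constructor
    · intro h0
      have happ : ∀ h : EuclideanSpace ℝ (Fin d),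
          (0:ℝ) = 2⁻¹ * (⟪v, A (T h)⟫ + ⟪T h, A v⟫) := by
        intro h
        have h' := congrFun (congrArg DFunLike.coe h0) h
        simpa [ContinuousLinearMap.smul_apply, ContinuousLinearMap.comp_apply,
          ContinuousLinearMap.prod_apply, fderivInnerCLM_apply, smul_eq_mul] using h'.symm
      have hAv : A v = 0 := by
        have h := happ (((u⁻¹ : (EuclideanSpace ℝ (Fin d) →L[ℝ] EuclideanSpace ℝ (Fin d))ˣ) :
          EuclideanSpace ℝ (Fin d) →L[ℝ] EuclideanSpace ℝ (Fin d)) (A v))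
        have hTinv : T (((u⁻¹ : (EuclideanSpace ℝ (Fin d) →L[ℝ] EuclideanSpace ℝ (Fin d))ˣ) :
            EuclideanSpace ℝ (Fin d) →L[ℝ] EuclideanSpace ℝ (Fin d)) (A v)) = A v := by
          rw [hT, ← ContinuousLinearMap.mul_apply, Units.mul_inv,
            ContinuousLinearMap.one_apply]
        rw [hTinv] at h
        have hsym : ⟪v, A (A v)⟫ = ⟪A v, A v⟫ := (hAsa.isSymmetric v (A v)).symm
        rw [hsym] at h
        have h2 : ⟪A v, A v⟫ = (0:ℝ) := by linarith
        exact inner_self_eq_zero.mp h2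
      have hv0 : v = 0 := hq_zero v (by rw [hAv, inner_zero_right])
      have hTθ : T θ = μ₀ := sub_eq_zero.mp hv0
      calc θ = ((u⁻¹ : (EuclideanSpace ℝ (Fin d) →L[ℝ] EuclideanSpace ℝ (Fin d))ˣ) :
            EuclideanSpace ℝ (Fin d) →L[ℝ] EuclideanSpace ℝ (Fin d)) (T θ) := by
              rw [hT, ← ContinuousLinearMap.mul_apply, Units.inv_mul,
                ContinuousLinearMap.one_apply]
        _ = θs := by rw [hTθ, hθs]
    · intro hθ
      have hv0 : v = 0 := by
        rw [hv, ← hθs] at *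
        rw [hθ, hTθs, sub_self]
      ext h
      simp [hv0, ContinuousLinearMap.smul_apply, ContinuousLinearMap.comp_apply,
        ContinuousLinearMap.prod_apply, fderivInnerCLM_apply]
  · intro θ'
    have h1 := hPRθs
    rw [hθs] at h1
    rw [h1, key θ']
    have := hq_nonneg (T θ' - μ₀)
    linarith
end

section
/- For repeated ERM under the Gaussian mean-shift model with θ₀ = 0 and constant sample size N per round, E‖θ_T - θ_PS‖² = ‖μ₀‖²·μ^{2T}/(1-μ)² + (dσ₀²/N)·(1-μ^{2T})/(1-μ²), where θ_PS = μ₀/(1-μ). -/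
open MeasureTheory Finset

local notation "⟪" x ", " y "⟫" => @inner ℝ _ _ x y

lemma aux_inner_int {Ω : Type*} [MeasureSpace Ω] {E : Type*}
    [NormedAddCommGroup E] [InnerProductSpace ℝ E]
    {f g : Ω → E} (hf : MemLp f 2 (volume : Measure Ω)) (hg : MemLp g 2 volume) :
    Integrable (fun ω => ⟪f ω, g ω⟫) volume := by
  have h := MeasureTheory.L2.integrable_inner (𝕜 := ℝ) (hf.toLp f) (hg.toLp g)
  refine h.congr ?_
  filter_upwards [hf.coeFn_toLp, hg.coeFn_toLp] with ω h1 h2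
  rw [h1, h2]

/-- Repeated ERM under the Gaussian mean-shift model with `θ₀ = 0` and constant sample
size `N`: `E‖θ_T - θ_PS‖² = ‖μ₀‖² μ^{2T}/(1-μ)² + (dσ₀²/N)(1-μ^{2T})/(1-μ²)`. The
Gaussian noise is abstracted by its first and second moments (mean zero, uncorrelated
across rounds, `E‖Z_t‖² = dσ₀²/N`). -/
theorem stmt10 {Ω : Type*} [MeasureSpace Ω] [IsProbabilityMeasure (volume : Measure Ω)]
    {d : ℕ} (μ σ₀ : ℝ) (h0μ : 0 ≤ μ) (hμ : μ < 1) (hσ₀ : 0 < σ₀)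
    (N : ℕ) (hN : 0 < N)
    (μ₀ θPS : EuclideanSpace ℝ (Fin d))
    (hPS : θPS = (1 / (1 - μ)) • μ₀)
    (Z : ℕ → Ω → EuclideanSpace ℝ (Fin d))
    (hZL2 : ∀ i, MemLp (Z i) 2 (volume : Measure Ω))
    (hZmean : ∀ i, ∫ ω, Z i ω = 0)
    (hZvar : ∀ i, ∫ ω, ‖Z i ω‖ ^ 2 = d * σ₀ ^ 2 / N)
    (hZuncorr : ∀ i j, i ≠ j → ∫ ω, (@inner ℝ _ _ (Z i ω) (Z j ω)) = 0)
    (θ : ℕ → Ω → EuclideanSpace ℝ (Fin d))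
    (hinit : ∀ ω, θ 0 ω = 0)
    (hrec : ∀ t ω, θ (t + 1) ω = μ₀ + μ • θ t ω + Z (t + 1) ω) (T : ℕ) :
    ∫ ω, ‖θ T ω - θPS‖ ^ 2
      = ‖μ₀‖ ^ 2 * μ ^ (2 * T) / (1 - μ) ^ 2
        + (d * σ₀ ^ 2 / N) * ((1 - μ ^ (2 * T)) / (1 - μ ^ 2)) := by
  have h1μ : (0:ℝ) < 1 - μ := by linarith
  -- the fixed point identity
  have hfix : μ₀ + μ • θPS = θPS := by
    rw [hPS, smul_smul]
    have h : (1:ℝ) + μ * (1 / (1 - μ)) = 1 / (1 - μ) := by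
      field_simp
      ring
    calc μ₀ + (μ * (1 / (1 - μ))) • μ₀
        = ((1:ℝ) + μ * (1 / (1 - μ))) • μ₀ := by rw [add_smul, one_smul]
      _ = (1 / (1 - μ)) • μ₀ := by rw [h]
  -- unrolled recursion
  have key : ∀ n ω, θ n ω - θPS
      = μ ^ n • (-θPS) + ∑ j ∈ range n, μ ^ (n - (j + 1)) • Z (j + 1) ω := by
    intro n
    induction n with
    | zero => intro ω; simp [hinit]
    | succ n ih =>
      intro ω
      have step : θ (n + 1) ω - θPS = μ • (θ n ω - θPS) + Z (n + 1) ω := by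
        rw [hrec n ω, smul_sub]
        rw [show μ₀ + μ • θ n ω + Z (n + 1) ω
            = (μ₀ + μ • θPS) + (μ • θ n ω - μ • θPS + Z (n + 1) ω) by abel, hfix]
        abel
      rw [step, ih ω, Finset.sum_range_succ, smul_add, smul_smul, ← pow_succ',
        Finset.smul_sum]
      have hsum : ∀ j ∈ range n, μ • μ ^ (n - (j + 1)) • Z (j + 1) ω
          = μ ^ (n + 1 - (j + 1)) • Z (j + 1) ω := by
        intro j hj
        rw [Finset.mem_range] at hj
        rw [smul_smul, ← pow_succ']
        congr 2
        omega
      rw [Finset.sum_congr rfl hsum]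
      simp
      abel
  -- the unified summand
  set g : ℕ → Ω → EuclideanSpace ℝ (Fin d) :=
    fun i ω => if i = 0 then μ ^ T • (-θPS) else μ ^ (T - i) • Z i ω with hg
  have hg0 : ∀ ω, g 0 ω = μ ^ T • (-θPS) := fun ω => by simp [hg]
  have hgs : ∀ j ω, g (j + 1) ω = μ ^ (T - (j + 1)) • Z (j + 1) ω :=
    fun j ω => by simp [hg]
  have hkey2 : ∀ ω, θ T ω - θPS = ∑ i ∈ range (T + 1), g i ω := by
    intro ω
    rw [key T ω, Finset.sum_range_succ' (fun i => g i ω) T]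
    simp_rw [hgs, hg0]
    rw [add_comm]
  have hgL2 : ∀ i, MemLp (g i) 2 (volume : Measure Ω) := by
    intro i
    by_cases h : i = 0
    · simpa [hg, h] using memLp_const (μ := (volume : Measure Ω)) (p := 2) (μ ^ T • (-θPS))
    · simp only [hg, if_neg h]; exact (hZL2 i).const_smul (μ ^ (T - i))
  have hint : ∀ i j, Integrable (fun ω => ⟪g i ω, g j ω⟫) volume :=
    fun i j => aux_inner_int (hgL2 i) (hgL2 j)
  have hZint : ∀ i, Integrable (Z i) volume := fun i => (hZL2 i).integrable one_le_two
  -- cross terms vanish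
  have hconstZ : ∀ (c : EuclideanSpace ℝ (Fin d)) i, ∫ ω, ⟪c, Z i ω⟫ = 0 := by
    intro c i
    rw [integral_inner (hZint i), hZmean i, inner_zero_right]
  have hcross : ∀ i j, i ≠ j → ∫ ω, ⟪g i ω, g j ω⟫ = 0 := by
    intro i j hij
    by_cases hi : i = 0
    · subst hi
      obtain ⟨k, rfl⟩ := Nat.exists_eq_succ_of_ne_zero (Ne.symm hij)
      simp only [hg, if_pos rfl, if_neg (Nat.succ_ne_zero k)]
      simp_rw [inner_smul_left, inner_smul_right, RCLike.conj_to_real]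
      rw [integral_const_mul, integral_const_mul, hconstZ, mul_zero, mul_zero]
    · by_cases hj : j = 0
      · subst hj
        have hc : ∀ ω, ⟪g i ω, g 0 ω⟫ = ⟪g 0 ω, g i ω⟫ :=
          fun ω => real_inner_comm _ _
        simp_rw [hc]
        obtain ⟨k, rfl⟩ := Nat.exists_eq_succ_of_ne_zero hi
        simp only [hg, if_pos rfl, if_neg (Nat.succ_ne_zero k)]
        simp_rw [inner_smul_left, inner_smul_right, RCLike.conj_to_real]
        rw [integral_const_mul, integral_const_mul, hconstZ, mul_zero, mul_zero]
      · simp only [hg, if_neg hi, if_neg hj]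
        simp_rw [inner_smul_left, inner_smul_right, RCLike.conj_to_real]
        rw [integral_const_mul, integral_const_mul, hZuncorr i j hij, mul_zero, mul_zero]
  -- main expansion
  have expand : ∫ ω, ‖θ T ω - θPS‖ ^ 2
      = ∑ i ∈ range (T + 1), ∫ ω, ⟪g i ω, g i ω⟫ := by
    have h1 : ∀ ω, ‖θ T ω - θPS‖ ^ 2
        = ∑ i ∈ range (T + 1), ∑ j ∈ range (T + 1), ⟪g i ω, g j ω⟫ := by
      intro ω
      rw [← real_inner_self_eq_norm_sq, hkey2 ω, sum_inner]
      exact Finset.sum_congr rfl fun i _ => inner_sum _ _ _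
    simp_rw [h1]
    rw [integral_finset_sum _ (fun i _ => integrable_finset_sum _ (fun j _ => hint i j))]
    refine Finset.sum_congr rfl fun i hi => ?_
    rw [integral_finset_sum _ (fun j _ => hint i j)]
    rw [Finset.sum_eq_single i (fun j _ hji => hcross i j (Ne.symm hji))
      (fun h => absurd hi h)]
  -- diagonal terms
  have hdiag0 : ∫ ω, ⟪g 0 ω, g 0 ω⟫ = μ ^ (2 * T) * ‖θPS‖ ^ 2 := by
    simp_rw [hg0, real_inner_self_eq_norm_sq]
    rw [integral_const]
    simp only [probReal_univ, smul_eq_mul, one_mul]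
    rw [norm_smul, norm_neg, Real.norm_eq_abs, abs_of_nonneg (pow_nonneg h0μ T),
      mul_pow, ← pow_mul, mul_comm T 2]
  have hdiagS : ∀ k, ∫ ω, ⟪g (k + 1) ω, g (k + 1) ω⟫
      = (μ ^ 2) ^ (T - (k + 1)) * (d * σ₀ ^ 2 / N) := by
    intro k
    simp_rw [hgs, real_inner_self_eq_norm_sq, norm_smul, Real.norm_eq_abs,
      abs_of_nonneg (pow_nonneg h0μ (T - (k + 1))), mul_pow]
    rw [integral_const_mul, hZvar]
    ring
  rw [expand, Finset.sum_range_succ' _ T, hdiag0]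
  have hsum : ∑ j ∈ range T, ∫ ω, ⟪g (j + 1) ω, g (j + 1) ω⟫
      = (d * σ₀ ^ 2 / N) * ((1 - μ ^ (2 * T)) / (1 - μ ^ 2)) := by
    simp_rw [hdiagS]
    rw [← Finset.sum_mul, mul_comm]
    congr 1
    have hre : ∀ j ∈ range T, (μ ^ 2) ^ (T - (j + 1)) = (μ ^ 2) ^ (T - 1 - j) := by
      intro j hj; congr 1; omega
    rw [Finset.sum_congr rfl hre, Finset.sum_range_reflect (fun j => (μ ^ 2) ^ j) T]
    have hμ2 : μ ^ 2 ≠ 1 := by nlinarith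
    rw [geom_sum_eq hμ2, ← pow_mul]
    rw [div_eq_div_iff (sub_ne_zero.mpr hμ2) (sub_ne_zero.mpr (Ne.symm hμ2))]
    ring
  rw [hsum, hPS]
  rw [norm_smul]
  have : |1 / (1 - μ)| = 1 / (1 - μ) := abs_of_pos (by positivity)
  rw [Real.norm_eq_abs, this]
  field_simp
  ring
end

section
/- For the scalar covariance-shift model with squared loss, regularized repeated risk minimization with regularizer R(θ,θ_t) = θ²/2 and constant regularization parameter λ* = σ(μ₀σ + (1-μ)σ₀)/(μ₀(1-μ) - σ₀σ) has fixed point equal to θ_PO = ((1-μ)μ₀ - σ₀σ)/(σ² + (1-μ)²). -/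
/-- Scalar covariance-shift model with squared loss: regularized repeated risk
minimization with `R(θ,θ_t) = θ²/2` and `λ* = σ(μ₀σ + (1-μ)σ₀)/(μ₀(1-μ) - σ₀σ)` has
fixed point (satisfying `θ̂(1+λ*) = μ₀ + μθ̂`) equal to
`θ_PO = ((1-μ)μ₀ - σ₀σ)/(σ² + (1-μ)²)`. -/
theorem stmt12 (σ₀ σ μ₀ μ θhat : ℝ)
    (hσ₀ : 0 < σ₀) (hσ : 0 < σ) (hμ : μ < 1)
    (hμ₀ : μ₀ ≠ 0) (hD : μ₀ * (1 - μ) - σ₀ * σ ≠ 0)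
    (hfix : θhat * (1 + σ * (μ₀ * σ + (1 - μ) * σ₀) / (μ₀ * (1 - μ) - σ₀ * σ))
      = μ₀ + μ * θhat) :
    θhat = ((1 - μ) * μ₀ - σ₀ * σ) / (σ ^ 2 + (1 - μ) ^ 2) := by
  have hden : σ ^ 2 + (1 - μ) ^ 2 ≠ 0 := by positivity
  have hD' : μ₀ * (1 - μ) - σ * σ₀ ≠ 0 := by rwa [mul_comm σ σ₀]
  field_simp at hfix ⊢
  have key : μ₀ * (θhat * (σ ^ 2 + (1 - μ) ^ 2)) = μ₀ * ((1 - μ) * μ₀ - σ₀ * σ) := by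
    linear_combination hfix
  exact mul_left_cancel₀ hμ₀ (by linear_combination key)
end

section
/- With time-growing regularization λ_t = t+1 under the Gaussian mean-shift model, the iterates satisfy θ_t - θ_PS = [Π_{i=1}^t (i+μ)/(i+1)](θ₀ - θ_PS) + Σ_{i=1}^t [Π_{j=i}^t (j+μ)/(j+1)]·Z_i/(i+μ), and the deterministic product Π_{i=1}^t (i+μ)/(i+1) converges to 0 as t → ∞ when μ < 1. -/
/-- With time-growing regularization `λ_{t-1} = t`, the iterates of regularized repeated
ERM satisfy the unrolled identity
`θ_t - θ_PS = [Π_{i=1}^t (i+μ)/(i+1)](θ₀ - θ_PS) + Σ_{i=1}^t [Π_{j=i}^t (j+μ)/(j+1)] Z_i/(i+μ)`,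
and the product `Π_{i=1}^t (i+μ)/(i+1)` tends to `0` as `t → ∞` when `μ < 1`. -/
theorem stmt17 {d : ℕ} (μ : ℝ) (h0μ : 0 ≤ μ) (hμ : μ < 1)
    (μ₀ θPS : EuclideanSpace ℝ (Fin d))
    (hPS : θPS = (1 / (1 - μ)) • μ₀)
    (Z θ : ℕ → EuclideanSpace ℝ (Fin d))
    (hrec : ∀ t : ℕ, θ (t + 1)
      = (1 / ((t : ℝ) + 2)) • μ₀ + (((t : ℝ) + 1 + μ) / ((t : ℝ) + 2)) • θ t
        + (1 / ((t : ℝ) + 2)) • Z (t + 1)) :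
    (∀ t : ℕ, θ t - θPS
      = (∏ i ∈ Finset.Icc 1 t, ((i : ℝ) + μ) / ((i : ℝ) + 1)) • (θ 0 - θPS)
        + ∑ i ∈ Finset.Icc 1 t,
            ((∏ j ∈ Finset.Icc i t, ((j : ℝ) + μ) / ((j : ℝ) + 1)) / ((i : ℝ) + μ)) • Z i) ∧
    Filter.Tendsto (fun t : ℕ => ∏ i ∈ Finset.Icc 1 t, ((i : ℝ) + μ) / ((i : ℝ) + 1))
      Filter.atTop (nhds 0) := by
  have hμ1 : (1 : ℝ) - μ ≠ 0 := by linarith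
  have key : ∀ t : ℕ, θ (t + 1) - θPS
      = (((t : ℝ) + 1 + μ) / ((t : ℝ) + 2)) • (θ t - θPS)
        + (1 / ((t : ℝ) + 2)) • Z (t + 1) := by
    intro t
    have ht2 : (t : ℝ) + 2 ≠ 0 := by positivity
    rw [hrec t, hPS]
    match_scalars
    · field_simp; ring
    · ring
    · ring
  constructor
  · intro t
    induction t with
    | zero => simp
    | succ t ih =>
      have ht2 : (t : ℝ) + 2 ≠ 0 := by positivity
      have htμ : ((t : ℝ) + 1) + μ ≠ 0 := by positivity
      rw [key t, ih, Finset.prod_Icc_succ_top (by omega : 1 ≤ t + 1),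
        Finset.sum_Icc_succ_top (by omega : 1 ≤ t + 1)]
      have hin : ∀ i ∈ Finset.Icc 1 t,
          ((∏ j ∈ Finset.Icc i (t+1), ((j : ℝ) + μ) / ((j : ℝ) + 1)) / ((i : ℝ) + μ)) • Z i
          = ((((t : ℝ) + 1 + μ) / ((t : ℝ) + 2)) *
              ((∏ j ∈ Finset.Icc i t, ((j : ℝ) + μ) / ((j : ℝ) + 1)) / ((i : ℝ) + μ))) • Z i := by
        intro i hi
        rw [Finset.prod_Icc_succ_top (by simp at hi; omega : i ≤ t + 1)]
        push_cast
        congr 1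
        ring
      rw [Finset.sum_congr rfl hin]
      rw [smul_add, Finset.smul_sum, smul_smul, Finset.Icc_self, Finset.prod_singleton]
      push_cast
      have h1 : (((t : ℝ) + 1 + μ) / ((t : ℝ) + 1 + 1)) / ((t : ℝ) + 1 + μ)
          = 1 / ((t : ℝ) + 2) := by field_simp; ring
      rw [h1]
      simp only [smul_smul]
      rw [add_assoc]
      rw [show ((∏ i ∈ Finset.Icc 1 t, ((i:ℝ) + μ) / ((i:ℝ) + 1)) *
            (((t:ℝ) + 1 + μ) / ((t:ℝ) + 1 + 1)))
          = ((t:ℝ) + 1 + μ) / ((t:ℝ) + 2) * ∏ i ∈ Finset.Icc 1 t, ((i:ℝ) + μ) / ((i:ℝ) + 1)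
          from by ring]
  · -- product tends to 0
    have hS : Filter.Tendsto (fun t : ℕ => ∑ i ∈ Finset.Icc 1 t, (1 - μ) / ((i : ℝ) + 1))
        Filter.atTop Filter.atTop := by
      have := Real.tendsto_sum_range_one_div_nat_succ_atTop
      have h2 : Filter.Tendsto (fun t : ℕ => ∑ i ∈ Finset.range t, 1 / ((i : ℝ) + 1))
          Filter.atTop Filter.atTop := this
      have heq : ∀ t : ℕ, ∑ i ∈ Finset.Icc 1 t, (1 - μ) / ((i : ℝ) + 1)
          = (1 - μ) * (∑ i ∈ Finset.range (t + 1), 1 / ((i : ℝ) + 1)) - (1 - μ) := by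
        intro t
        rw [← Finset.Ico_add_one_right_eq_Icc, Finset.sum_Ico_eq_sum_range,
          Finset.sum_range_succ' _ t]
        push_cast
        rw [mul_add, Finset.mul_sum]
        have hcong : ∀ i ∈ Finset.range t, (1 - μ) / ((1:ℝ) + (i:ℝ) + 1)
            = (1 - μ) * (1 / ((i:ℝ) + 1 + 1)) := by intro i _; ring
        rw [Finset.sum_congr rfl hcong]
        ring
      simp only [heq]
      apply Filter.tendsto_atTop_add_const_right
      apply Filter.Tendsto.const_mul_atTop (by linarith : (0:ℝ) < 1 - μ)
      exact h2.comp (Filter.tendsto_add_atTop_nat 1)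
    have hbound : ∀ t : ℕ, ∏ i ∈ Finset.Icc 1 t, ((i : ℝ) + μ) / ((i : ℝ) + 1)
        ≤ Real.exp (-(∑ i ∈ Finset.Icc 1 t, (1 - μ) / ((i : ℝ) + 1))) := by
      intro t
      calc ∏ i ∈ Finset.Icc 1 t, ((i : ℝ) + μ) / ((i : ℝ) + 1)
            ≤ ∏ i ∈ Finset.Icc 1 t, Real.exp (-((1 - μ) / ((i : ℝ) + 1))) := by
              apply Finset.prod_le_prod
              · intro i hi; positivity
              · intro i hi
                have hi1 : (1:ℝ) ≤ (i:ℝ) := by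
                  simp at hi; exact_mod_cast hi.1
                have : ((i : ℝ) + μ) / ((i : ℝ) + 1) = 1 - (1 - μ) / ((i : ℝ) + 1) := by
                  field_simp
                  ring
                rw [this]
                have := Real.add_one_le_exp (-((1 - μ) / ((i : ℝ) + 1)))
                linarith
          _ = Real.exp (-(∑ i ∈ Finset.Icc 1 t, (1 - μ) / ((i : ℝ) + 1))) := by
              rw [← Finset.sum_neg_distrib, Real.exp_sum]
    have hpos : ∀ t : ℕ, 0 ≤ ∏ i ∈ Finset.Icc 1 t, ((i : ℝ) + μ) / ((i : ℝ) + 1) := by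
      intro t
      apply Finset.prod_nonneg
      intro i hi
      have hi1 : (1:ℝ) ≤ (i:ℝ) := by simp at hi; exact_mod_cast hi.1
      positivity
    have hexp : Filter.Tendsto
        (fun t : ℕ => Real.exp (-(∑ i ∈ Finset.Icc 1 t, (1 - μ) / ((i : ℝ) + 1))))
        Filter.atTop (nhds 0) := by
      apply Real.tendsto_exp_atBot.comp
      exact Filter.tendsto_neg_atBot_iff.mpr hS
    exact tendsto_of_tendsto_of_tendsto_of_le_of_le tendsto_const_nhds hexp hpos hbound
end

section
/- For the scalar linear shift with squared loss, θ_PS = θ_PO if and only if σ·(μ₀σ + σ₀(1-μ)) = 0; in particular, when σ₀, σ > 0, μ₀ > 0, and μ < 1, the performatively stable and optimal points are distinct. -/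
/-- For the scalar linear shift with squared loss, `θ_PS = θ_PO` iff
`σ·(μ₀σ + σ₀(1-μ)) = 0`; in particular, when `σ₀, σ > 0`, `μ₀ > 0`, and `μ < 1`,
the performatively stable and optimal points are distinct. -/
theorem stmt19 (σ₀ σ μ₀ μ : ℝ) (hσ₀ : 0 ≤ σ₀) (hσ : 0 ≤ σ) (hμ : μ < 1)
    (θPS θPO : ℝ)
    (hPS : θPS = μ₀ / (1 - μ))
    (hPO : θPO = ((1 - μ) * μ₀ - σ₀ * σ) / (σ ^ 2 + (1 - μ) ^ 2)) :
    (θPS = θPO ↔ σ * (μ₀ * σ + σ₀ * (1 - μ)) = 0)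
    ∧ (0 < σ₀ → 0 < σ → 0 < μ₀ → θPS ≠ θPO) := by
  have ha : (0:ℝ) < 1 - μ := by linarith
  have hd : (0:ℝ) < σ ^ 2 + (1 - μ) ^ 2 := by positivity
  have key : θPS = θPO ↔ σ * (μ₀ * σ + σ₀ * (1 - μ)) = 0 := by
    rw [hPS, hPO, div_eq_div_iff (by linarith) (by linarith)]
    constructor
    · intro h; nlinarith
    · intro h; nlinarith
  refine ⟨key, fun h0 h1 h2 hne => ?_⟩
  have := key.mp hne
  nlinarith [mul_pos h1 h2, mul_pos h0 ha]
end
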